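/- Let $\mathscr{V} = \{V_n\}$, $\mathscr{U} = \{U_n\}$ be consistent sequences of $\{G_n\}$-representations with $\mathscr{V}$ generated in degree $d$, and fix $n_0 \geq d$ and a $G_{n_0}$-equivariant map $A_{n_0} : V_{n_0} \to U_{n_0}$. There exists a family of $G_n$-equivariant maps $\{A_n : V_n \to U_n\}_{n \geq n_0}$ with $A_{n+1}|_{V_n} = A_n$ for all $n \geq n_0$ if and only if the following holds: for all $n \in \mathbb{N}$, all finite families $g_i \in G_n$ and $x_i \in V_d$, the relation $\sum_i g_i x_i = 0$ implies $\sum_i g_i (A_{n_0} x_i) = 0$. Moreover, when such an extension exists it is unique. -/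

import Mathlib

/-- The property that `B` is a compatible family of `G n`-equivariant maps
`V n → U n` for `n ≥ n₀` extending the map `A` given in degree `n₀`. -/
def IsUpwardExtension
    {Γ : Type*} [Group Γ] (G : ℕ → Subgroup Γ)
    {HV HU : Type*}
    [NormedAddCommGroup HV] [InnerProductSpace ℝ HV]
    [NormedAddCommGroup HU] [InnerProductSpace ℝ HU]
    (ρV : Γ →* (HV ≃ₗᵢ[ℝ] HV)) (ρU : Γ →* (HU ≃ₗᵢ[ℝ] HU))
    (V : ℕ → Submodule ℝ HV) (U : ℕ → Submodule ℝ HU)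
    (A : HV →ₗ[ℝ] HU) (n₀ : ℕ) (B : ℕ → HV →ₗ[ℝ] HU) : Prop :=
  (∀ n, n₀ ≤ n → ∀ v ∈ V n, B n v ∈ U n) ∧
  (∀ n, n₀ ≤ n → ∀ g ∈ G n, ∀ v ∈ V n, B n (ρV g v) = ρU g (B n v)) ∧
  (∀ n, n₀ ≤ n → ∀ v ∈ V n, B (n + 1) v = B n v) ∧
  (∀ v ∈ V n₀, B n₀ v = A v)

/-- With `{V n}` generated in degree `d` and `n₀ ≥ d`, a
`G n₀`-equivariant map `A : V n₀ → U n₀` extends to a compatible family of equivariant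
maps `{A n : V n → U n}` for `n ≥ n₀` if and only if every relation among the
generators is preserved: whenever `∑ i, g i • x i = 0` with `g i ∈ G n`, `x i ∈ V d`,
also `∑ i, g i • (A (x i)) = 0`. Moreover the extension, when it exists, is unique. -/
theorem extend_upwards_iff_relations
    {Γ : Type*} [Group Γ] (G : ℕ → Subgroup Γ) (hG : ∀ n, G n ≤ G (n + 1))
    {HV HU : Type*}
    [NormedAddCommGroup HV] [InnerProductSpace ℝ HV]
    [NormedAddCommGroup HU] [InnerProductSpace ℝ HU]
    (ρV : Γ →* (HV ≃ₗᵢ[ℝ] HV)) (ρU : Γ →* (HU ≃ₗᵢ[ℝ] HU))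
    (V : ℕ → Submodule ℝ HV) (hV : ∀ n, V n ≤ V (n + 1))
    (hactV : ∀ n m, n ≤ m → ∀ g ∈ G n, ∀ v ∈ V m, ρV g v ∈ V m)
    (U : ℕ → Submodule ℝ HU) (hU : ∀ n, U n ≤ U (n + 1))
    (hactU : ∀ n m, n ≤ m → ∀ g ∈ G n, ∀ u ∈ U m, ρU g u ∈ U m)
    (d : ℕ)
    (hgen : ∀ n, d ≤ n →
      V n = Submodule.span ℝ {x : HV | ∃ g ∈ G n, ∃ v ∈ V d, x = ρV g v})
    (n₀ : ℕ) (hn₀ : d ≤ n₀)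
    (A : HV →ₗ[ℝ] HU)
    (hAmaps : ∀ v ∈ V n₀, A v ∈ U n₀)
    (hAequiv : ∀ g ∈ G n₀, ∀ v ∈ V n₀, A (ρV g v) = ρU g (A v)) :
    ((∃ B : ℕ → HV →ₗ[ℝ] HU, IsUpwardExtension G ρV ρU V U A n₀ B) ↔
      (∀ (n m : ℕ) (g : Fin m → Γ) (x : Fin m → HV),
        (∀ i, g i ∈ G n) → (∀ i, x i ∈ V d) →
        (∑ i, ρV (g i) (x i)) = 0 → (∑ i, ρU (g i) (A (x i))) = 0)) ∧
    (∀ B B' : ℕ → HV →ₗ[ℝ] HU,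
      IsUpwardExtension G ρV ρU V U A n₀ B → IsUpwardExtension G ρV ρU V U A n₀ B' →
      ∀ n, n₀ ≤ n → ∀ v ∈ V n, B n v = B' n v) := by
  classical
  have Gmono : Monotone G := monotone_nat_of_le_succ hG
  have Vmono : Monotone V := monotone_nat_of_le_succ hV
  have Umono : Monotone U := monotone_nat_of_le_succ hU
  -- any extension agrees with `A` on `V n₀` in every degree `m ≥ n₀`
  have stable : ∀ (B : ℕ → HV →ₗ[ℝ] HU), IsUpwardExtension G ρV ρU V U A n₀ B →
      ∀ m, n₀ ≤ m → ∀ v ∈ V n₀, B m v = A v := by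
    rintro B ⟨h1, h2, h3, h4⟩ m hm
    induction m, hm using Nat.le_induction with
    | base => exact h4
    | succ m hm ih =>
      intro v hv
      rw [h3 m hm v (Vmono hm hv), ih v hv]
  constructor
  · constructor
    · -- extension exists → relations are preserved
      rintro ⟨B, hB⟩ n m g x hg hx hsum
      obtain ⟨h1, h2, h3, h4⟩ := hB
      have hn₀N : n₀ ≤ max n n₀ := le_max_right _ _
      have hxN : ∀ i, x i ∈ V (max n n₀) := fun i => Vmono (hn₀.trans hn₀N) (hx i)
      have hgN : ∀ i, g i ∈ G (max n n₀) := fun i => Gmono (le_max_left n n₀) (hg i)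
      calc ∑ i, ρU (g i) (A (x i))
          = ∑ i, ρU (g i) (B (max n n₀) (x i)) := by
            refine Finset.sum_congr rfl fun i _ => ?_
            rw [stable B ⟨h1, h2, h3, h4⟩ (max n n₀) hn₀N (x i) (Vmono hn₀ (hx i))]
        _ = ∑ i, B (max n n₀) (ρV (g i) (x i)) := by
            refine Finset.sum_congr rfl fun i _ =>
              (h2 (max n n₀) hn₀N (g i) (hgN i) (x i) (hxN i)).symm
        _ = B (max n n₀) (∑ i, ρV (g i) (x i)) := (map_sum (B (max n n₀)) _ _).symm
        _ = 0 := by rw [hsum, map_zero]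
    · -- relations preserved → extension exists
      intro hrel
      set S : ℕ → Set (HV × HU) := fun n =>
        {p | ∃ g ∈ G n, ∃ v ∈ V d, p = (ρV g v, ρU g (A v))} with hSdef
      set W : ℕ → Submodule ℝ (HV × HU) := fun n => Submodule.span ℝ (S n) with hWdef
      have hzero : ∀ n, ∀ (p : HV × HU), p ∈ W n → p.1 = 0 → p.2 = 0 := by
        intro n p hp hp1
        rw [hWdef, Submodule.mem_span_set'] at hp
        obtain ⟨m, c, q, hq⟩ := hp
        choose g hg x hx hpx using fun i => (q i).2
        have h1 : ∑ i, ρV (g i) (c i • x i) = (0 : HV) := by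
          calc ∑ i, ρV (g i) (c i • x i)
              = ∑ i, (c i • (q i : HV × HU)).1 := by
                refine Finset.sum_congr rfl fun i _ => ?_
                rw [hpx i, Prod.smul_mk, map_smul]
            _ = (∑ i, c i • (q i : HV × HU)).1 := Prod.fst_sum.symm
            _ = 0 := by rw [hq, hp1]
        have h2 := hrel n m g (fun i => c i • x i) hg
          (fun i => (V d).smul_mem _ (hx i)) h1
        calc p.2 = (∑ i, c i • (q i : HV × HU)).2 := by rw [hq]
          _ = ∑ i, (c i • (q i : HV × HU)).2 := Prod.snd_sum
          _ = ∑ i, ρU (g i) (A (c i • x i)) := by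
                refine Finset.sum_congr rfl fun i _ => ?_
                rw [hpx i, Prod.smul_mk, map_smul, map_smul]
          _ = 0 := h2
      choose Q hQ using fun n => ((W n).map (LinearMap.fst ℝ HV HU)).exists_isCompl
      set B : ℕ → HV →ₗ[ℝ] HU := fun n =>
        ((W n).toLinearPMapAux (hzero n)).comp
          (Submodule.projectionOnto _ (Q n) (hQ n)) with hBdef
      have hBmem : ∀ n v (hv : v ∈ (W n).map (LinearMap.fst ℝ HV HU)),
          (v, B n v) ∈ W n := by
        intro n v hv
        have hb : B n v = (W n).toLinearPMapAux (hzero n) ⟨v, hv⟩ := by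
          rw [hBdef]
          simp only [LinearMap.comp_apply]
          rw [Submodule.projectionOnto_apply_left (hQ n) ⟨v, hv⟩]
        rw [hb]
        exact Submodule.valFromGraph_mem (hzero n) hv
      have huniq : ∀ n v u, v ∈ (W n).map (LinearMap.fst ℝ HV HU) →
          (v, u) ∈ W n → B n v = u := by
        intro n v u hv hu
        have h0 := (W n).sub_mem (hBmem n v hv) hu
        rw [Prod.mk_sub_mk, sub_self] at h0
        exact sub_eq_zero.mp (hzero n _ h0 rfl)
      have hdom : ∀ n, d ≤ n → (W n).map (LinearMap.fst ℝ HV HU) = V n := by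
        intro n hdn
        rw [hgen n hdn, hWdef, Submodule.map_span]
        congr 1
        ext y
        constructor
        · rintro ⟨p, ⟨g, hg, v, hv, rfl⟩, rfl⟩
          exact ⟨g, hg, v, hv, rfl⟩
        · rintro ⟨g, hg, v, hv, rfl⟩
          exact ⟨(ρV g v, ρU g (A v)), ⟨g, hg, v, hv, rfl⟩, rfl⟩
      have hmemD : ∀ n, d ≤ n → ∀ v ∈ V n, v ∈ (W n).map (LinearMap.fst ℝ HV HU) := by
        intro n hdn v hv
        rw [hdom n hdn]; exact hv
      -- equivariance of the graphs
      have hWact : ∀ n, ∀ g ∈ G n, ∀ p ∈ W n, (ρV g p.1, ρU g p.2) ∈ W n := by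
        intro n g hg p hp
        induction hp using Submodule.span_induction with
        | mem q hq =>
          obtain ⟨h, hh, v, hv, rfl⟩ := hq
          refine Submodule.subset_span ⟨g * h, mul_mem hg hh, v, hv, ?_⟩
          rw [map_mul, map_mul]
          rfl
        | zero => simp; exact (W n).zero_mem
        | add a b _ _ iha ihb =>
          have : (ρV g (a + b).1, ρU g (a + b).2)
              = (ρV g a.1, ρU g a.2) + (ρV g b.1, ρU g b.2) := by
            simp [Prod.fst_add, Prod.snd_add, map_add]
          rw [this]; exact (W n).add_mem iha ihb
        | smul c a _ ih =>
          have : (ρV g (c • a).1, ρU g (c • a).2) = c • (ρV g a.1, ρU g a.2) := by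
            simp [Prod.smul_fst, Prod.smul_snd, map_smul]
          rw [this]; exact (W n).smul_mem c ih
      have hWmono : ∀ n, W n ≤ W (n + 1) := by
        intro n
        apply Submodule.span_le.mpr
        rintro p ⟨g, hg, v, hv, rfl⟩
        exact Submodule.subset_span ⟨g, hG n hg, v, hv, rfl⟩
      refine ⟨B, ?_, ?_, ?_, ?_⟩
      · -- maps into U n
        intro n hn v hv
        have hdn : d ≤ n := hn₀.trans hn
        have hWle : W n ≤ (V n).prod (U n) := by
          apply Submodule.span_le.mpr
          rintro p ⟨g, hg, w, hw, rfl⟩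
          refine Submodule.mem_prod.mpr ⟨?_, ?_⟩
          · exact hactV n n le_rfl g hg _ (Vmono hdn hw)
          · exact hactU n n le_rfl g hg _ (Umono hn (hAmaps w (Vmono hn₀ hw)))
        exact (Submodule.mem_prod.mp (hWle (hBmem n v (hmemD n hdn v hv)))).2
      · -- equivariance
        intro n hn g hg v hv
        have hdn : d ≤ n := hn₀.trans hn
        have h1 := hWact n g hg _ (hBmem n v (hmemD n hdn v hv))
        exact huniq n _ _ (hmemD n hdn _ (hactV n n le_rfl g hg v hv)) h1
      · -- compatibility
        intro n hn v hv
        have hdn : d ≤ n := hn₀.trans hn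
        exact huniq (n + 1) v (B n v) (hmemD (n + 1) (hdn.trans (Nat.le_succ n)) v (hV n hv))
          (hWmono n (hBmem n v (hmemD n hdn v hv)))
      · -- agrees with A in degree n₀
        have hA : ∀ w ∈ V n₀, (w, A w) ∈ W n₀ := by
          intro w hw
          rw [hgen n₀ hn₀] at hw
          induction hw using Submodule.span_induction with
          | mem x hx =>
            obtain ⟨g, hg, y, hy, rfl⟩ := hx
            refine Submodule.subset_span ⟨g, hg, y, hy, ?_⟩
            rw [hAequiv g hg y (Vmono hn₀ hy)]
          | zero => simp; exact (W n₀).zero_mem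
          | add a b _ _ iha ihb =>
            have : ((a + b : HV), A (a + b)) = (a, A a) + (b, A b) := by
              simp [map_add]
            rw [this]; exact (W n₀).add_mem iha ihb
          | smul c a _ ih =>
            have : ((c • a : HV), A (c • a)) = c • (a, A a) := by simp [map_smul]
            rw [this]; exact (W n₀).smul_mem c ih
        intro v hv
        exact huniq n₀ v (A v) (hmemD n₀ hn₀ v hv) (hA v hv)
  · -- uniqueness
    intro B B' hB hB' n hn v hv
    have hdn : d ≤ n := hn₀.trans hn
    obtain ⟨h1, h2, h3, h4⟩ := hB
    obtain ⟨h1', h2', h3', h4'⟩ := hB'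
    rw [hgen n hdn] at hv
    induction hv using Submodule.span_induction with
    | mem x hx =>
      obtain ⟨g, hg, y, hy, rfl⟩ := hx
      have hyn : y ∈ V n := Vmono hdn hy
      rw [h2 n hn g hg y hyn, h2' n hn g hg y hyn,
        stable B ⟨h1, h2, h3, h4⟩ n hn y (Vmono hn₀ hy),
        stable B' ⟨h1', h2', h3', h4'⟩ n hn y (Vmono hn₀ hy)]
    | zero => simp
    | add a b _ _ iha ihb => simp only [map_add, iha, ihb]
    | smul c a _ ih => simp only [map_smul, ih]
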